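/- In the 2D Gaussian model x = s + n with C_s = [[1, c],[c, 1]], 0 < |c| < 1, C_n = σ²I, σ > 0, the expected mean squared error of the optimal estimator ŝ = C_s(C_s+σ²I)⁻¹x equals Tr(C_s − C_s(C_s+σ²I)⁻¹C_s), and this quantity is strictly decreasing in |c|. -/

import Mathlib

open MeasureTheory ProbabilityTheory Matrix
open Real
open scoped NNReal ENNReal

/-- `s` is a centered Gaussian random vector with covariance matrix `C` under `μ`:
every linear functional of `s` has a (possibly degenerate) centered real Gaussian
distribution with the corresponding variance. -/
def IsCenteredGaussianVec {Ω : Type*} [MeasurableSpace Ω] (μ : Measure Ω)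
    {k : ℕ} (s : Ω → Fin k → ℝ) (C : Matrix (Fin k) (Fin k) ℝ) : Prop :=
  ∀ a : Fin k → ℝ,
    Measure.map (fun ω => ∑ i, a i * s ω i) μ =
      gaussianReal 0 (Real.toNNReal (a ⬝ᵥ C.mulVec a))

/-- The in-distribution expected MSE of the Bayes-optimal linear estimator in the 2D
Gaussian model with source covariance `[[1, c], [c, 1]]` and noise covariance `σ²I`. -/
noncomputable def mseF (σ c : ℝ) : ℝ :=
  (!![1, c; c, 1] -
      !![1, c; c, 1] * (!![1, c; c, 1] + σ ^ 2 • (1 : Matrix (Fin 2) (Fin 2) ℝ))⁻¹ *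
        !![1, c; c, 1]).trace

lemma integral_gaussianReal_smul (v : ℝ≥0) (hv : v ≠ 0) (g : ℝ → ℝ) :
    ∫ x, g x ∂(gaussianReal 0 v) = ∫ x, gaussianPDFReal 0 v x * g x := by
  rw [gaussianReal_of_var_ne_zero 0 hv]
  have hmeas : Measurable fun x => (gaussianPDFReal 0 v x).toNNReal :=
    (measurable_gaussianPDFReal 0 v).real_toNNReal
  have hd : (gaussianPDF 0 v) = fun x => ((fun x => (gaussianPDFReal 0 v x).toNNReal) x : ℝ≥0∞) := by
    ext x; rfl
  rw [hd, integral_withDensity_eq_integral_smul hmeas]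
  refine integral_congr_ae (Filter.Eventually.of_forall fun x => ?_)
  simp [NNReal.smul_def, Real.coe_toNNReal _ (gaussianPDFReal_nonneg 0 v x)]

lemma integrable_gaussianReal_iff (v : ℝ≥0) (hv : v ≠ 0) (g : ℝ → ℝ) :
    Integrable g (gaussianReal 0 v) ↔ Integrable (fun x => gaussianPDFReal 0 v x * g x) volume := by
  rw [gaussianReal_of_var_ne_zero 0 hv]
  have hmeas : Measurable fun x => (gaussianPDFReal 0 v x).toNNReal :=
    (measurable_gaussianPDFReal 0 v).real_toNNReal
  have hd : (gaussianPDF 0 v) = fun x => ((fun x => (gaussianPDFReal 0 v x).toNNReal) x : ℝ≥0∞) := by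
    ext x; rfl
  rw [hd, integrable_withDensity_iff_integrable_smul hmeas]
  refine integrable_congr (Filter.Eventually.of_forall fun x => ?_)
  simp [NNReal.smul_def, Real.coe_toNNReal _ (gaussianPDFReal_nonneg 0 v x)]

lemma integral_even_eq_two_mul_Ioi (f : ℝ → ℝ) (hf : ∀ x, f (-x) = f x)
    (hint : Integrable f volume) :
    ∫ x, f x = 2 * ∫ x in Set.Ioi (0:ℝ), f x := by
  rw [← integral_add_compl measurableSet_Ioi hint, Set.compl_Ioi]
  have h1 : ∫ x in Set.Iic (0:ℝ), f x = ∫ x in Set.Ioi (0:ℝ), f x := by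
    rw [← neg_zero, ← integral_comp_neg_Ioi]
    simp only [hf, neg_zero]
  rw [h1]; ring

lemma integral_sq_exp (b : ℝ) (hb : 0 < b) :
    ∫ x : ℝ, x ^ 2 * rexp (-b * x ^ 2) = b ^ (-(3:ℝ)/2) * (Real.sqrt π / 2) := by
  have hev : ∀ x : ℝ, (-x) ^ 2 * rexp (-b * (-x) ^ 2) = x ^ 2 * rexp (-b * x ^ 2) := by
    intro x; ring_nf
  have hint : Integrable (fun x : ℝ => x ^ 2 * rexp (-b * x ^ 2)) volume := by
    have := integrable_rpow_mul_exp_neg_mul_sq hb (s := 2) (by norm_num)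
    refine this.congr (Filter.Eventually.of_forall fun x => ?_)
    have hx : x ^ (2:ℝ) = x ^ (2:ℕ) := by
      rw [show ((2:ℝ) = ((2:ℕ):ℝ)) by norm_num, Real.rpow_natCast]
    simp only [hx]
  rw [integral_even_eq_two_mul_Ioi _ hev hint]
  have h2 : ∫ x in Set.Ioi (0:ℝ), x ^ 2 * rexp (-b * x ^ 2)
      = ∫ x in Set.Ioi (0:ℝ), x ^ (2:ℝ) * rexp (-b * x ^ (2:ℝ)) := by
    refine setIntegral_congr_fun measurableSet_Ioi fun x _ => ?_
    have hx : x ^ (2:ℝ) = x ^ (2:ℕ) := by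
      rw [show ((2:ℝ) = ((2:ℕ):ℝ)) by norm_num, Real.rpow_natCast]
    simp only [hx]
  rw [h2, integral_rpow_mul_exp_neg_mul_rpow (by norm_num) (by norm_num) hb]
  have hg : Real.Gamma (((2:ℝ) + 1) / 2) = Real.sqrt π / 2 := by
    rw [show ((2:ℝ)+1)/2 = 1/2 + 1 by norm_num, Real.Gamma_add_one (by norm_num),
      Real.Gamma_one_half_eq]
    ring
  rw [hg]
  norm_num
  ring

lemma integrable_dirac' {f : ℝ → ℝ} (hf : Measurable f) (a : ℝ) :
    Integrable f (MeasureTheory.Measure.dirac a) := by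
  refine ⟨hf.aestronglyMeasurable, ?_⟩
  simp [HasFiniteIntegral, lintegral_dirac' a hf.enorm]

lemma gaussianPDFReal_zero_eq (v : ℝ≥0) (x : ℝ) :
    gaussianPDFReal 0 v x = (Real.sqrt (2 * π * v))⁻¹ * rexp (-(2 * (v:ℝ))⁻¹ * x ^ 2) := by
  rw [gaussianPDFReal]
  congr 1
  rw [sub_zero, neg_div, div_eq_inv_mul, neg_mul]

lemma integrable_id_gaussianReal (v : ℝ≥0) :
    Integrable (fun x : ℝ => x) (gaussianReal 0 v) := by
  by_cases hv : v = 0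
  · rw [hv, gaussianReal_zero_var]
    exact integrable_dirac' (by fun_prop) 0
  have hvpos : (0:ℝ) < v := by positivity
  have hb : (0:ℝ) < (2 * (v:ℝ))⁻¹ := by positivity
  rw [integrable_gaussianReal_iff v hv]
  have := ((integrable_rpow_mul_exp_neg_mul_sq hb (s := 1) (by norm_num)).const_mul
    ((Real.sqrt (2 * π * v))⁻¹))
  refine this.congr (Filter.Eventually.of_forall fun x => ?_)
  simp only [gaussianPDFReal_zero_eq, Real.rpow_one]
  ring

lemma integrable_sq_gaussianReal (v : ℝ≥0) :
    Integrable (fun x : ℝ => x ^ 2) (gaussianReal 0 v) := by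
  by_cases hv : v = 0
  · rw [hv, gaussianReal_zero_var]
    exact integrable_dirac' (by fun_prop) 0
  have hvpos : (0:ℝ) < v := by positivity
  have hb : (0:ℝ) < (2 * (v:ℝ))⁻¹ := by positivity
  rw [integrable_gaussianReal_iff v hv]
  have := ((integrable_rpow_mul_exp_neg_mul_sq hb (s := 2) (by norm_num)).const_mul
    ((Real.sqrt (2 * π * v))⁻¹))
  refine this.congr (Filter.Eventually.of_forall fun x => ?_)
  have hx : x ^ (2:ℝ) = x ^ (2:ℕ) := by
    rw [show ((2:ℝ) = ((2:ℕ):ℝ)) by norm_num, Real.rpow_natCast]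
  simp only [gaussianPDFReal_zero_eq, hx]
  ring

lemma integral_id_gaussianReal' (v : ℝ≥0) :
    ∫ x, x ∂(gaussianReal 0 v) = 0 := by
  by_cases hv : v = 0
  · simp [hv]
  rw [integral_gaussianReal_smul v hv]
  have hodd : ∀ x : ℝ, gaussianPDFReal 0 v (-x) * (-x) = -(gaussianPDFReal 0 v x * x) := by
    intro x
    rw [gaussianPDFReal_zero_eq, gaussianPDFReal_zero_eq]
    ring_nf
  have h := integral_neg_eq_self (fun x => gaussianPDFReal 0 v x * x) volume
  simp only [hodd, integral_neg] at h
  linarith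

lemma integral_sq_gaussianReal' (v : ℝ≥0) :
    ∫ x, x ^ 2 ∂(gaussianReal 0 v) = v := by
  by_cases hv : v = 0
  · simp [hv]
  have hvpos : (0:ℝ) < v := by positivity
  have hb : (0:ℝ) < (2 * (v:ℝ))⁻¹ := by positivity
  rw [integral_gaussianReal_smul v hv]
  have h1 : ∀ x : ℝ, gaussianPDFReal 0 v x * x ^ 2
      = (Real.sqrt (2 * π * v))⁻¹ * (x ^ 2 * rexp (-(2 * (v:ℝ))⁻¹ * x ^ 2)) := by
    intro x; rw [gaussianPDFReal_zero_eq]; ring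
  simp only [h1]
  rw [integral_const_mul, integral_sq_exp _ hb]
  have h2 : ((2 * (v:ℝ))⁻¹) ^ (-(3:ℝ)/2) = (2 * (v:ℝ)) * Real.sqrt (2 * (v:ℝ)) := by
    have h2v : (0:ℝ) ≤ 2 * (v:ℝ) := by positivity
    rw [show (-(3:ℝ)/2) = -((3:ℝ)/2) by ring, Real.inv_rpow h2v, ← Real.rpow_neg h2v,
      neg_neg, show ((3:ℝ)/2) = 1 + 1/2 by norm_num,
      Real.rpow_add (by positivity), Real.rpow_one, Real.sqrt_eq_rpow]
  rw [h2]
  have h3 : Real.sqrt (2 * π * v) = Real.sqrt (2 * (v:ℝ)) * Real.sqrt π := by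
    rw [← Real.sqrt_mul (by positivity)]
    ring_nf
  rw [h3]
  have hs2v : (0:ℝ) < Real.sqrt (2 * (v:ℝ)) := Real.sqrt_pos.mpr (by positivity)
  have hsπ : (0:ℝ) < Real.sqrt π := Real.sqrt_pos.mpr pi_pos
  field_simp

lemma moments_of_map {Ω : Type*} [MeasurableSpace Ω] {μ : Measure Ω} {f : Ω → ℝ}
    (hf : Measurable f) {v : ℝ≥0} (h : Measure.map f μ = gaussianReal 0 v) :
    Integrable f μ ∧ (∫ ω, f ω ∂μ) = 0 ∧ Integrable (fun ω => f ω ^ 2) μ ∧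
      (∫ ω, f ω ^ 2 ∂μ) = v := by
  have hid : AEStronglyMeasurable (fun x : ℝ => x) (Measure.map f μ) :=
    aestronglyMeasurable_id
  have hsq : AEStronglyMeasurable (fun x : ℝ => x ^ 2) (Measure.map f μ) :=
    (measurable_id.pow_const 2).aestronglyMeasurable
  refine ⟨?_, ?_, ?_, ?_⟩
  · have := (integrable_map_measure hid hf.aemeasurable).mp
      (by rw [h]; exact integrable_id_gaussianReal v)
    exact this
  · have := integral_map hf.aemeasurable hid
    rw [← this, h, integral_id_gaussianReal']
  · have := (integrable_map_measure hsq hf.aemeasurable).mp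
      (by rw [h]; exact integrable_sq_gaussianReal v)
    exact this
  · have := integral_map hf.aemeasurable hsq
    rw [← this, h, integral_sq_gaussianReal']

lemma second_moment_add {Ω : Type*} [MeasurableSpace Ω] (μ : Measure Ω)
    [IsProbabilityMeasure μ] (f g : Ω → ℝ) (hfm : Measurable f) (hgm : Measurable g)
    {vf vg : ℝ≥0} (hf : Measure.map f μ = gaussianReal 0 vf)
    (hg : Measure.map g μ = gaussianReal 0 vg) (hind : IndepFun f g μ) :
    Integrable (fun ω => (f ω + g ω) ^ 2) μ ∧
      (∫ ω, (f ω + g ω) ^ 2 ∂μ) = (vf : ℝ) + vg := by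
  obtain ⟨hfi, hfz, hf2i, hf2⟩ := moments_of_map hfm hf
  obtain ⟨hgi, hgz, hg2i, hg2⟩ := moments_of_map hgm hg
  have hmul : Integrable (fun ω => f ω * g ω) μ := hind.integrable_mul hfi hgi
  have hmulz : (∫ ω, f ω * g ω ∂μ) = 0 := by
    have := hind.integral_mul_eq_mul_integral hfm.aestronglyMeasurable hgm.aestronglyMeasurable
    calc (∫ ω, f ω * g ω ∂μ) = integral μ (f * g) := by rfl
    _ = integral μ f * integral μ g := this
    _ = 0 := by rw [show integral μ f = ∫ ω, f ω ∂μ from rfl, hfz, zero_mul]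
  have key : (fun ω => (f ω + g ω) ^ 2)
      = fun ω => f ω ^ 2 + (2 * (f ω * g ω) + g ω ^ 2) := by funext ω; ring
  have hint : Integrable (fun ω => f ω ^ 2 + (2 * (f ω * g ω) + g ω ^ 2)) μ :=
    hf2i.add ((hmul.const_mul 2).add hg2i)
  refine ⟨key ▸ hint, ?_⟩
  have h1 : (∫ ω, (f ω ^ 2 + (2 * (f ω * g ω) + g ω ^ 2)) ∂μ)
      = (∫ ω, f ω ^ 2 ∂μ) + ∫ ω, (2 * (f ω * g ω) + g ω ^ 2) ∂μ :=
    integral_add hf2i ((hmul.const_mul 2).add hg2i)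
  rw [key, h1]
  have h2 : (∫ ω, (2 * (f ω * g ω) + g ω ^ 2) ∂μ)
      = (∫ ω, 2 * (f ω * g ω) ∂μ) + ∫ ω, g ω ^ 2 ∂μ :=
    integral_add (hmul.const_mul 2) hg2i
  rw [h2, integral_const_mul, hmulz, hf2, hg2]
  ring

lemma quadA (c : ℝ) (a : Fin 2 → ℝ) :
    a ⬝ᵥ (!![1, c; c, 1]).mulVec a = a 0 ^ 2 + 2 * c * a 0 * a 1 + a 1 ^ 2 := by
  simp [dotProduct, Matrix.mulVec, Fin.sum_univ_two]
  ring

lemma quadN (σ : ℝ) (a : Fin 2 → ℝ) :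
    a ⬝ᵥ (σ ^ 2 • (1 : Matrix (Fin 2) (Fin 2) ℝ)).mulVec a = σ ^ 2 * (a 0 ^ 2 + a 1 ^ 2) := by
  simp [dotProduct, Matrix.mulVec, Fin.sum_univ_two, Matrix.one_apply]
  ring

lemma EsqLin {Ω : Type*} [MeasurableSpace Ω] (μ : Measure Ω) [IsProbabilityMeasure μ]
    (c σ : ℝ) (hc : |c| ≤ 1) (s n : Ω → Fin 2 → ℝ)
    (hs : IsCenteredGaussianVec μ s !![1, c; c, 1])
    (hn : IsCenteredGaussianVec μ n (σ ^ 2 • (1 : Matrix (Fin 2) (Fin 2) ℝ)))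
    (hms : Measurable s) (hmn : Measurable n) (hindep : IndepFun s n μ)
    (a b : Fin 2 → ℝ) :
    Integrable (fun ω => ((∑ i, a i * s ω i) + ∑ i, b i * n ω i) ^ 2) μ ∧
      (∫ ω, ((∑ i, a i * s ω i) + ∑ i, b i * n ω i) ^ 2 ∂μ)
        = (a 0 ^ 2 + 2 * c * a 0 * a 1 + a 1 ^ 2) + σ ^ 2 * (b 0 ^ 2 + b 1 ^ 2) := by
  have hφ : Measurable fun y : Fin 2 → ℝ => ∑ i, a i * y i := by fun_prop
  have hψ : Measurable fun y : Fin 2 → ℝ => ∑ i, b i * y i := by fun_prop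
  have hfm : Measurable fun ω => ∑ i, a i * s ω i := hφ.comp hms
  have hgm : Measurable fun ω => ∑ i, b i * n ω i := hψ.comp hmn
  have hind : IndepFun (fun ω => ∑ i, a i * s ω i) (fun ω => ∑ i, b i * n ω i) μ :=
    hindep.comp hφ hψ
  have hqa : 0 ≤ a ⬝ᵥ (!![1, c; c, 1]).mulVec a := by
    rw [quadA]
    have h1 := abs_le.mp hc
    nlinarith [sq_nonneg (a 0 + a 1), sq_nonneg (a 0 - a 1)]
  have hqb : 0 ≤ b ⬝ᵥ (σ ^ 2 • (1 : Matrix (Fin 2) (Fin 2) ℝ)).mulVec b := by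
    rw [quadN]; positivity
  obtain ⟨hint, hval⟩ := second_moment_add μ _ _ hfm hgm (hs a) (hn b) hind
  refine ⟨hint, ?_⟩
  rw [hval, Real.coe_toNNReal _ hqa, Real.coe_toNNReal _ hqb, quadA, quadN]

lemma hM_eq (σ c : ℝ) : !![1, c; c, 1] + σ ^ 2 • (1 : Matrix (Fin 2) (Fin 2) ℝ)
    = !![1 + σ ^ 2, c; c, 1 + σ ^ 2] := by
  ext i j
  fin_cases i <;> fin_cases j <;>
    simp [Matrix.one_apply]

lemma hd_pos {σ c : ℝ} (hc : |c| < 1) : 0 < (1 + σ ^ 2) ^ 2 - c ^ 2 := by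
  have h1 := abs_lt.mp hc
  nlinarith [sq_nonneg σ, sq_nonneg (σ^2)]

lemma hMinv_eq {σ c : ℝ} (hc : |c| < 1) :
    (!![1 + σ ^ 2, c; c, 1 + σ ^ 2] : Matrix (Fin 2) (Fin 2) ℝ)⁻¹
      = ((1 + σ ^ 2) ^ 2 - c ^ 2)⁻¹ • !![1 + σ ^ 2, -c; -c, 1 + σ ^ 2] := by
  have hd := (hd_pos (σ := σ) hc).ne'
  refine Matrix.inv_eq_right_inv ?_
  ext i j
  fin_cases i <;> fin_cases j <;>
    (simp [Matrix.mul_apply, Fin.sum_univ_two, Matrix.one_apply]; field_simp; ring)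

lemma hK_eq {σ c : ℝ} (hc : |c| < 1) :
    !![1, c; c, 1] * (!![1, c; c, 1] + σ ^ 2 • (1 : Matrix (Fin 2) (Fin 2) ℝ))⁻¹
      = !![(1 + σ ^ 2 - c ^ 2) / ((1 + σ ^ 2) ^ 2 - c ^ 2),
            c * σ ^ 2 / ((1 + σ ^ 2) ^ 2 - c ^ 2);
           c * σ ^ 2 / ((1 + σ ^ 2) ^ 2 - c ^ 2),
            (1 + σ ^ 2 - c ^ 2) / ((1 + σ ^ 2) ^ 2 - c ^ 2)] := by
  have hd := (hd_pos (σ := σ) hc).ne'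
  rw [hM_eq, hMinv_eq hc]
  ext i j
  fin_cases i <;> fin_cases j <;>
    (simp [Matrix.mul_apply, Fin.sum_univ_two]; field_simp; ring)

lemma mseF_eq {σ c : ℝ} (hc : |c| < 1) :
    mseF σ c = 2 * σ ^ 2 * (1 + σ ^ 2 - c ^ 2) / ((1 + σ ^ 2) ^ 2 - c ^ 2) := by
  have hd := (hd_pos (σ := σ) hc).ne'
  rw [mseF, hK_eq hc]
  simp [Matrix.trace_fin_two, Matrix.mul_apply, Fin.sum_univ_two, Matrix.sub_apply]
  field_simp
  ring

lemma mseF_mono (σ : ℝ) (hσ : 0 < σ) (c₁ c₂ : ℝ) (h0 : 0 < |c₁|) (h12 : |c₁| < |c₂|)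
    (h2 : |c₂| < 1) : mseF σ c₂ < mseF σ c₁ := by
  have hc1 : |c₁| < 1 := h12.trans h2
  have hsq : c₁ ^ 2 < c₂ ^ 2 := by
    rw [← sq_abs c₁, ← sq_abs c₂]
    exact pow_lt_pow_left₀ h12 (abs_nonneg _) (by norm_num)
  have hd1 := hd_pos (σ := σ) hc1
  have hd2 := hd_pos (σ := σ) h2
  rw [mseF_eq hc1, mseF_eq h2, div_lt_div_iff₀ hd2 hd1]
  have key : 0 < (c₂ ^ 2 - c₁ ^ 2) * (σ ^ 2 * (σ ^ 2 * (1 + σ ^ 2))) :=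
    mul_pos (sub_pos.mpr hsq) (by positivity)
  nlinarith [key]


/-- In the 2D Gaussian model `x = s + n` with `C_s = [[1, c], [c, 1]]`, `0 < |c| < 1`,
`C_n = σ²I`, `σ > 0`: the expected mean squared error of the optimal estimator
`ŝ = C_s (C_s + σ²I)⁻¹ x` equals `Tr(C_s − C_s (C_s + σ²I)⁻¹ C_s)`, and this quantity is
strictly decreasing in `|c|`. -/
theorem stmt9 {Ω : Type*} [MeasurableSpace Ω] (μ : Measure Ω) [IsProbabilityMeasure μ]
    (c σ : ℝ) (hc0 : 0 < |c|) (hc1 : |c| < 1) (hσ : 0 < σ)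
    (s n : Ω → Fin 2 → ℝ)
    (hs : IsCenteredGaussianVec μ s !![1, c; c, 1])
    (hn : IsCenteredGaussianVec μ n (σ ^ 2 • (1 : Matrix (Fin 2) (Fin 2) ℝ)))
    (hms : Measurable s) (hmn : Measurable n) (hindep : IndepFun s n μ)
    (x : Ω → Fin 2 → ℝ) (hx : ∀ ω, x ω = s ω + n ω) :
    (∫ ω, ∑ i, (s ω i -
        (!![1, c; c, 1] * (!![1, c; c, 1] + σ ^ 2 • (1 : Matrix (Fin 2) (Fin 2) ℝ))⁻¹).mulVec
          (x ω) i) ^ 2 ∂μ = mseF σ c) ∧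
    (∀ c₁ c₂ : ℝ, 0 < |c₁| → |c₁| < |c₂| → |c₂| < 1 → mseF σ c₂ < mseF σ c₁) := by
  refine ⟨?_, fun c₁ c₂ h0 h12 h2 => mseF_mono σ hσ c₁ c₂ h0 h12 h2⟩
  have hd := (hd_pos (σ := σ) (c := c) hc1).ne'
  set p : ℝ := (1 + σ ^ 2 - c ^ 2) / ((1 + σ ^ 2) ^ 2 - c ^ 2) with hp
  set q : ℝ := c * σ ^ 2 / ((1 + σ ^ 2) ^ 2 - c ^ 2) with hq
  have hK := hK_eq (σ := σ) (c := c) hc1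
  rw [← hp, ← hq] at hK
  have hpt : ∀ ω, (∑ i, (s ω i -
      (!![1, c; c, 1] * (!![1, c; c, 1] + σ ^ 2 • (1 : Matrix (Fin 2) (Fin 2) ℝ))⁻¹).mulVec
        (x ω) i) ^ 2)
      = ((∑ i, (![1 - p, -q]) i * s ω i) + ∑ i, (![-p, -q]) i * n ω i) ^ 2
        + ((∑ i, (![-q, 1 - p]) i * s ω i) + ∑ i, (![-q, -p]) i * n ω i) ^ 2 := by
    intro ω
    rw [hK, hx ω]
    simp [Fin.sum_univ_two, Matrix.mulVec, dotProduct]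
    ring
  obtain ⟨h0i, h0v⟩ := EsqLin μ c σ hc1.le s n hs hn hms hmn hindep ![1 - p, -q] ![-p, -q]
  obtain ⟨h1i, h1v⟩ := EsqLin μ c σ hc1.le s n hs hn hms hmn hindep ![-q, 1 - p] ![-q, -p]
  have hcong : (∫ ω, ∑ i, (s ω i -
      (!![1, c; c, 1] * (!![1, c; c, 1] + σ ^ 2 • (1 : Matrix (Fin 2) (Fin 2) ℝ))⁻¹).mulVec
        (x ω) i) ^ 2 ∂μ)
      = ∫ ω, (((∑ i, (![1 - p, -q]) i * s ω i) + ∑ i, (![-p, -q]) i * n ω i) ^ 2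
        + ((∑ i, (![-q, 1 - p]) i * s ω i) + ∑ i, (![-q, -p]) i * n ω i) ^ 2) ∂μ :=
    integral_congr_ae (Filter.Eventually.of_forall hpt)
  have hadd : (∫ ω, (((∑ i, (![1 - p, -q]) i * s ω i) + ∑ i, (![-p, -q]) i * n ω i) ^ 2
        + ((∑ i, (![-q, 1 - p]) i * s ω i) + ∑ i, (![-q, -p]) i * n ω i) ^ 2) ∂μ)
      = (∫ ω, ((∑ i, (![1 - p, -q]) i * s ω i) + ∑ i, (![-p, -q]) i * n ω i) ^ 2 ∂μ)
        + ∫ ω, ((∑ i, (![-q, 1 - p]) i * s ω i) + ∑ i, (![-q, -p]) i * n ω i) ^ 2 ∂μ :=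
    integral_add h0i h1i
  rw [hcong, hadd, h0v, h1v, mseF_eq hc1]
  simp only [Matrix.cons_val_zero, Matrix.cons_val_one, Matrix.head_cons]
  rw [hp, hq]
  field_simp
  ring
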